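/- With all parameters other than τ fixed, lim_{τ → 0⁺} C_DL(τ) = P_DL(λ_l, μ, ρ); that is, as the SIR threshold tends to zero, the downlink coverage probability converges to the downlink association probability exp(−2 λ_l ∫₀^ρ (1 − exp(−2 μ √(ρ² − u²))) du). -/

import Mathlib

open MeasureTheory Real Set Filter
open Topology

noncomputable def A (rho mu : ℝ) : ℝ :=
  ∫ u in (0:ℝ)..rho, (1 - Real.exp (-2 * mu * Real.sqrt (rho ^ 2 - u ^ 2)))

noncomputable def P_SL (lamL mu rho : ℝ) : ℝ := 1 - Real.exp (-2 * lamL * A rho mu)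

noncomputable def P_DL (lamL mu rho : ℝ) : ℝ := Real.exp (-2 * lamL * A rho mu)

noncomputable def K1 (tau alpha x : ℝ) : ℝ :=
  x ^ 2 + 2 * ∫ r in Set.Ioi x,
    tau * x ^ alpha * r ^ (1 - alpha) / (1 + tau * x ^ alpha * r ^ (-alpha))

noncomputable def K2 (mu rho alpha eta tau x : ℝ) : ℝ :=
  ∫ r in (0:ℝ)..rho,
    (1 - Real.exp (-2 * mu * Real.sqrt (rho ^ 2 - r ^ 2)
      - 2 * mu * ∫ u in Set.Ioi (Real.sqrt (rho ^ 2 - r ^ 2)),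
          tau * x ^ alpha * eta * (r ^ 2 + u ^ 2) ^ (-(alpha / 2)) /
            (1 + tau * x ^ alpha * eta * (r ^ 2 + u ^ 2) ^ (-(alpha / 2)))))

noncomputable def K3 (mu rho alpha eta tau x : ℝ) : ℝ :=
  ∫ r in Set.Ioi rho,
    (1 - Real.exp (-2 * mu * ∫ u in Set.Ioi (0:ℝ),
        tau * x ^ alpha * eta * (r ^ 2 + u ^ 2) ^ (-(alpha / 2)) /
          (1 + tau * x ^ alpha * eta * (r ^ 2 + u ^ 2) ^ (-(alpha / 2)))))

noncomputable def C_DL (lamB lamL mu rho alpha eta tau : ℝ) : ℝ :=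
  ∫ x in Set.Ioi (0:ℝ),
    2 * Real.pi * lamB * x *
      Real.exp (-(Real.pi * lamB * K1 tau alpha x) - 2 * lamL * K2 mu rho alpha eta tau x
        - 2 * lamL * K3 mu rho alpha eta tau x)

noncomputable def hh (alpha c r u : ℝ) : ℝ :=
  c * (r ^ 2 + u ^ 2) ^ (-(alpha / 2)) / (1 + c * (r ^ 2 + u ^ 2) ^ (-(alpha / 2)))

lemma aux_one_sub_exp_le (t : ℝ) : 1 - Real.exp (-t) ≤ t := by
  nlinarith [Real.add_one_le_exp (-t)]

lemma hh_nonneg {alpha c : ℝ} (hc : 0 ≤ c) (r u : ℝ) : 0 ≤ hh alpha c r u := by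
  have hQ : (0:ℝ) ≤ (r ^ 2 + u ^ 2) ^ (-(alpha / 2)) := Real.rpow_nonneg (by positivity) _
  exact div_nonneg (mul_nonneg hc hQ) (by nlinarith [mul_nonneg hc hQ])

lemma hh_le {alpha c : ℝ} (hc : 0 ≤ c) (r u : ℝ) :
    hh alpha c r u ≤ c * (r ^ 2 + u ^ 2) ^ (-(alpha / 2)) := by
  have hQ : (0:ℝ) ≤ (r ^ 2 + u ^ 2) ^ (-(alpha / 2)) := Real.rpow_nonneg (by positivity) _
  exact div_le_self (mul_nonneg hc hQ) (by nlinarith [mul_nonneg hc hQ])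


lemma measurable_setIntegral_param {α : Type*} [MeasurableSpace α] {F : α × ℝ → ℝ}
    (hF : Measurable F) {s : α → ℝ} (hs : Measurable s) :
    Measurable fun x : α => ∫ u in Ioi (s x), F (x, u) := by
  have hS : MeasurableSet {p : α × ℝ | s p.1 < p.2} :=
    measurableSet_lt (hs.comp measurable_fst) measurable_snd
  have hG : Measurable ({p : α × ℝ | s p.1 < p.2}.indicator F) := hF.indicator hS
  have h := (hG.stronglyMeasurable.integral_prod_right' (ν := (volume : Measure ℝ)))
  have heq : (fun x : α => ∫ u in Ioi (s x), F (x, u))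
      = fun x : α => ∫ u, ({p : α × ℝ | s p.1 < p.2}.indicator F) (x, u) := by
    funext x
    rw [← integral_indicator measurableSet_Ioi]
    congr 1
  rw [heq]
  exact h.measurable

lemma measurable_setIntegral_param' {α : Type*} [MeasurableSpace α] {F : α × ℝ → ℝ}
    (hF : Measurable F) {T : Set ℝ} (hT : MeasurableSet T) :
    Measurable fun x : α => ∫ u in T, F (x, u) := by
  have hG : Measurable ((Prod.snd ⁻¹' T : Set (α × ℝ)).indicator F) :=
    hF.indicator (hT.preimage measurable_snd)
  have h := (hG.stronglyMeasurable.integral_prod_right' (ν := (volume : Measure ℝ)))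
  have heq : (fun x : α => ∫ u in T, F (x, u))
      = fun x : α => ∫ u, ((Prod.snd ⁻¹' T : Set (α × ℝ)).indicator F) (x, u) := by
    funext x
    rw [← integral_indicator hT]
    congr 1
  rw [heq]
  exact h.measurable


lemma Q_le_u {alpha : ℝ} (halpha : 0 < alpha) {u : ℝ} (hu : 0 < u) (r : ℝ) :
    (r ^ 2 + u ^ 2) ^ (-(alpha / 2)) ≤ u ^ (-alpha) := by
  have h1 : (u ^ 2 : ℝ) ^ (-(alpha / 2)) = u ^ (-alpha) := by
    rw [← Real.rpow_natCast u 2, ← Real.rpow_mul hu.le]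
    congr 1; ring
  rw [← h1]
  exact Real.rpow_le_rpow_of_nonpos (by positivity) (by nlinarith [sq_nonneg r]) (by linarith)

lemma Q_le_r {alpha : ℝ} (halpha : 0 < alpha) {r : ℝ} (hr : 0 < r) (u : ℝ) :
    (r ^ 2 + u ^ 2) ^ (-(alpha / 2)) ≤ r ^ (-alpha) := by
  have h1 : (r ^ 2 : ℝ) ^ (-(alpha / 2)) = r ^ (-alpha) := by
    rw [← Real.rpow_natCast r 2, ← Real.rpow_mul hr.le]
    congr 1; ring
  rw [← h1]
  exact Real.rpow_le_rpow_of_nonpos (by positivity) (by nlinarith [sq_nonneg u]) (by linarith)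

lemma integrableOn_Q_Ioi {alpha r : ℝ} (halpha : 2 < alpha) (hr : 0 < r) :
    IntegrableOn (fun u : ℝ => (r ^ 2 + u ^ 2) ^ (-(alpha / 2))) (Ioi 0) := by
  have hm : Measurable fun u : ℝ => (r ^ 2 + u ^ 2) ^ (-(alpha / 2)) := by fun_prop
  have h1 : IntegrableOn (fun u : ℝ => (r ^ 2 + u ^ 2) ^ (-(alpha / 2))) (Ioc 0 r) := by
    refine Integrable.mono' (g := fun _ => r ^ (-alpha)) (integrableOn_const (lt_top_iff_ne_top.1 ?_))
      hm.aestronglyMeasurable ?_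
    · exact measure_Ioc_lt_top
    · filter_upwards with u
      rw [Real.norm_of_nonneg (Real.rpow_nonneg (by positivity) _)]
      exact Q_le_r (by linarith) hr u
  have h2 : IntegrableOn (fun u : ℝ => (r ^ 2 + u ^ 2) ^ (-(alpha / 2))) (Ioi r) := by
    refine Integrable.mono' (g := fun u => u ^ (-alpha))
      (integrableOn_Ioi_rpow_of_lt (by linarith) hr) hm.aestronglyMeasurable ?_
    filter_upwards [ae_restrict_mem measurableSet_Ioi] with u hu
    rw [Real.norm_of_nonneg (Real.rpow_nonneg (by positivity) _)]
    exact Q_le_u (by linarith) (hr.trans hu) r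
  have := h1.union h2
  rwa [Set.Ioc_union_Ioi_eq_Ioi hr.le] at this

lemma integral_Q_le {alpha r : ℝ} (halpha : 2 < alpha) (hr : 0 < r) :
    ∫ u in Ioi (0:ℝ), (r ^ 2 + u ^ 2) ^ (-(alpha / 2)) ≤ (1 + (alpha - 1)⁻¹) * r ^ (1 - alpha) := by
  have hint := integrableOn_Q_Ioi halpha hr
  have hsub1 : Ioc (0:ℝ) r ⊆ Ioi 0 := Set.Ioc_subset_Ioi_self
  have hsub2 : Ioi r ⊆ Ioi (0:ℝ) := Set.Ioi_subset_Ioi hr.le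
  have hsplit : ∫ u in Ioi (0:ℝ), (r ^ 2 + u ^ 2) ^ (-(alpha / 2))
      = (∫ u in Ioc (0:ℝ) r, (r ^ 2 + u ^ 2) ^ (-(alpha / 2)))
        + ∫ u in Ioi r, (r ^ 2 + u ^ 2) ^ (-(alpha / 2)) := by
    rw [← setIntegral_union (Set.Ioc_disjoint_Ioi le_rfl) measurableSet_Ioi
      (hint.mono_set hsub1) (hint.mono_set hsub2), Set.Ioc_union_Ioi_eq_Ioi hr.le]
  rw [hsplit]
  have hrp : r ^ (1 - alpha) = r * r ^ (-alpha) := by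
    rw [show (1 - alpha) = 1 + (-alpha) by ring, Real.rpow_add hr, Real.rpow_one]
  have h1 : (∫ u in Ioc (0:ℝ) r, (r ^ 2 + u ^ 2) ^ (-(alpha / 2))) ≤ r ^ (1 - alpha) := by
    have h := setIntegral_mono_on (hint.mono_set hsub1)
      (integrableOn_const measure_Ioc_lt_top.ne) measurableSet_Ioc
      (fun u _ => Q_le_r (show (0:ℝ) < alpha by linarith) hr u)
    refine h.trans ?_
    rw [setIntegral_const, Real.volume_real_Ioc_of_le hr.le, smul_eq_mul, sub_zero,
      hrp]
  have h2 : (∫ u in Ioi r, (r ^ 2 + u ^ 2) ^ (-(alpha / 2))) ≤ (alpha - 1)⁻¹ * r ^ (1 - alpha) := by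
    have h : (∫ u in Ioi r, (r ^ 2 + u ^ 2) ^ (-(alpha / 2))) ≤ ∫ u in Ioi r, u ^ (-alpha) :=
      setIntegral_mono_on (hint.mono_set hsub2)
        (integrableOn_Ioi_rpow_of_lt (by linarith) hr) measurableSet_Ioi
        (fun u hu => Q_le_u (by linarith) (hr.trans hu) r)
    refine h.trans ?_
    rw [integral_Ioi_rpow_of_lt (by linarith) hr]
    have e : -r ^ (-alpha + 1) / (-alpha + 1) = (alpha - 1)⁻¹ * r ^ (1 - alpha) := by
      rw [show (-alpha + 1) = 1 - alpha by ring]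
      have h1a : (1:ℝ) - alpha ≠ 0 := by linarith
      have h2a : (alpha:ℝ) - 1 ≠ 0 := by linarith
      field_simp
      ring
    rw [e]
  linarith

lemma measurable_hh {alpha c r : ℝ} : Measurable fun u => hh alpha c r u := by
  unfold hh; fun_prop

lemma tendsto_inner {alpha b r : ℝ} (hb : 0 < b) {S : Set ℝ} (hS : MeasurableSet S)
    (hQ : IntegrableOn (fun u : ℝ => (r ^ 2 + u ^ 2) ^ (-(alpha / 2))) S) :
    Tendsto (fun tau : ℝ => ∫ u in S, hh alpha (tau * b) r u) (nhdsWithin 0 (Ioi 0)) (𝓝 0) := by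
  set M := ∫ u in S, (r ^ 2 + u ^ 2) ^ (-(alpha / 2)) with hM
  refine squeeze_zero' (g := fun τ => τ * (b * M)) ?_ ?_ ?_
  · filter_upwards [self_mem_nhdsWithin] with τ (hτ : τ ∈ Ioi (0:ℝ))
    rw [Set.mem_Ioi] at hτ
    exact setIntegral_nonneg hS fun u _ => hh_nonneg (by positivity) _ _
  · filter_upwards [self_mem_nhdsWithin] with τ (hτ : τ ∈ Ioi (0:ℝ))
    rw [Set.mem_Ioi] at hτ
    have hc : 0 ≤ τ * b := by positivity
    have hmaj : IntegrableOn (fun u : ℝ => (τ * b) * (r ^ 2 + u ^ 2) ^ (-(alpha / 2))) S :=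
      hQ.const_mul _
    have hint : IntegrableOn (fun u => hh alpha (τ * b) r u) S := by
      refine hmaj.mono' measurable_hh.aestronglyMeasurable ?_
      filter_upwards with u
      rw [Real.norm_of_nonneg (hh_nonneg hc _ _)]
      exact hh_le hc _ _
    calc ∫ u in S, hh alpha (τ * b) r u
        ≤ ∫ u in S, (τ * b) * (r ^ 2 + u ^ 2) ^ (-(alpha / 2)) :=
          setIntegral_mono_on hint hmaj hS fun u _ => hh_le hc r u
      _ = τ * (b * M) := by rw [integral_const_mul]; ring
  · have h := (continuous_id.mul (continuous_const (y := b * M))).tendsto (0:ℝ)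
    simpa [Pi.mul_def] using h.mono_left nhdsWithin_le_nhds

noncomputable def ff (alpha c r : ℝ) : ℝ :=
  c * r ^ (1 - alpha) / (1 + c * r ^ (-alpha))

lemma ff_nonneg {alpha c r : ℝ} (hc : 0 ≤ c) (hr : 0 ≤ r) : 0 ≤ ff alpha c r := by
  have h1 : (0:ℝ) ≤ c * r ^ (1 - alpha) := mul_nonneg hc (Real.rpow_nonneg hr _)
  have h2 : (0:ℝ) ≤ c * r ^ (-alpha) := mul_nonneg hc (Real.rpow_nonneg hr _)
  exact div_nonneg h1 (by linarith)

lemma ff_le {alpha c r : ℝ} (hc : 0 ≤ c) (hr : 0 ≤ r) : ff alpha c r ≤ c * r ^ (1 - alpha) := by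
  have h1 : (0:ℝ) ≤ c * r ^ (1 - alpha) := mul_nonneg hc (Real.rpow_nonneg hr _)
  have h2 : (0:ℝ) ≤ c * r ^ (-alpha) := mul_nonneg hc (Real.rpow_nonneg hr _)
  exact div_le_self h1 (by linarith)

lemma measurable_ff {alpha c : ℝ} : Measurable fun r => ff alpha c r := by
  unfold ff; fun_prop

lemma tendsto_inner_K1 {alpha x : ℝ} (halpha : 2 < alpha) (hx : 0 < x) :
    Tendsto (fun tau : ℝ => ∫ r in Ioi x, ff alpha (tau * x ^ alpha) r)
      (nhdsWithin 0 (Ioi 0)) (𝓝 0) := by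
  set M := ∫ r in Ioi x, r ^ (1 - alpha) with hM
  have hQ : IntegrableOn (fun r : ℝ => r ^ (1 - alpha)) (Ioi x) :=
    integrableOn_Ioi_rpow_of_lt (by linarith) hx
  refine squeeze_zero' (g := fun τ => τ * (x ^ alpha * M)) ?_ ?_ ?_
  · filter_upwards [self_mem_nhdsWithin] with τ (hτ : τ ∈ Ioi (0:ℝ))
    rw [Set.mem_Ioi] at hτ
    exact setIntegral_nonneg measurableSet_Ioi fun r hr =>
      ff_nonneg (by positivity) (le_of_lt (hx.trans hr))
  · filter_upwards [self_mem_nhdsWithin] with τ (hτ : τ ∈ Ioi (0:ℝ))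
    rw [Set.mem_Ioi] at hτ
    have hc : 0 ≤ τ * x ^ alpha := by positivity
    have hmaj : IntegrableOn (fun r : ℝ => (τ * x ^ alpha) * r ^ (1 - alpha)) (Ioi x) :=
      hQ.const_mul _
    have hint : IntegrableOn (fun r => ff alpha (τ * x ^ alpha) r) (Ioi x) := by
      refine hmaj.mono' measurable_ff.aestronglyMeasurable ?_
      filter_upwards [ae_restrict_mem measurableSet_Ioi] with r hr
      rw [Real.norm_of_nonneg (ff_nonneg hc (le_of_lt (hx.trans hr)))]
      exact ff_le hc (le_of_lt (hx.trans hr))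
    calc ∫ r in Ioi x, ff alpha (τ * x ^ alpha) r
        ≤ ∫ r in Ioi x, (τ * x ^ alpha) * r ^ (1 - alpha) :=
          setIntegral_mono_on hint hmaj measurableSet_Ioi
            fun r hr => ff_le hc (le_of_lt (hx.trans hr))
      _ = τ * (x ^ alpha * M) := by rw [integral_const_mul]; ring
  · have h := (continuous_id.mul (continuous_const (y := x ^ alpha * M))).tendsto (0:ℝ)
    simpa [Pi.mul_def] using h.mono_left nhdsWithin_le_nhds

lemma integral_x_exp {b : ℝ} (hb : 0 < b) :
    ∫ x in Ioi (0:ℝ), x * Real.exp (-b * x ^ 2) = (2 * b)⁻¹ := by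
  have hderiv : ∀ x ∈ Ici (0:ℝ), HasDerivAt (fun y : ℝ => -(2 * b)⁻¹ * Real.exp (-b * y ^ 2))
      (x * Real.exp (-b * x ^ 2)) x := by
    intro x _
    have h1 : HasDerivAt (fun y : ℝ => -b * y ^ 2) (-b * (2 * x)) x := by
      simpa using ((hasDerivAt_pow 2 x).const_mul (-b))
    have h2 := (h1.exp).const_mul (-(2 * b)⁻¹)
    refine h2.congr_deriv ?_
    have hb0 : b * b⁻¹ = 1 := mul_inv_cancel₀ hb.ne'
    linear_combination (x * Real.exp (-b * x ^ 2)) * hb0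
  have htend : Tendsto (fun y : ℝ => -(2 * b)⁻¹ * Real.exp (-b * y ^ 2)) atTop (𝓝 0) := by
    have h1 : Tendsto (fun y : ℝ => -b * y ^ 2) atTop atBot := by
      have := (tendsto_pow_atTop (two_ne_zero)).const_mul_atTop hb
      have h2 := tendsto_neg_atTop_atBot.comp this
      refine h2.congr fun y => ?_
      simp
    have := Real.tendsto_exp_atBot.comp h1
    have h3 := this.const_mul (-(2 * b)⁻¹)
    simpa using h3
  have h := integral_Ioi_of_hasDerivAt_of_tendsto'
    (fun x hx => hderiv x hx) ((integrable_mul_exp_neg_mul_sq hb).integrableOn) htend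
  rw [h]
  norm_num

lemma K1_eq (tau alpha x : ℝ) :
    K1 tau alpha x = x ^ 2 + 2 * ∫ r in Ioi x, ff alpha (tau * x ^ alpha) r := rfl

lemma K2_eq (mu rho alpha eta tau x : ℝ) :
    K2 mu rho alpha eta tau x = ∫ r in (0:ℝ)..rho,
      (1 - Real.exp (-2 * mu * Real.sqrt (rho ^ 2 - r ^ 2)
        - 2 * mu * ∫ u in Ioi (Real.sqrt (rho ^ 2 - r ^ 2)),
            hh alpha (tau * x ^ alpha * eta) r u)) := rfl

lemma K3_eq (mu rho alpha eta tau x : ℝ) :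
    K3 mu rho alpha eta tau x = ∫ r in Ioi rho,
      (1 - Real.exp (-2 * mu * ∫ u in Ioi (0:ℝ), hh alpha (tau * x ^ alpha * eta) r u)) := rfl

lemma K1_ge {tau alpha x : ℝ} (htau : 0 < tau) (hx : 0 < x) :
    x ^ 2 ≤ K1 tau alpha x := by
  rw [K1_eq]
  have h : 0 ≤ ∫ r in Ioi x, ff alpha (tau * x ^ alpha) r :=
    setIntegral_nonneg measurableSet_Ioi fun r hr =>
      ff_nonneg (by positivity) (le_of_lt (hx.trans hr))
  linarith

lemma K1_tendsto {alpha x : ℝ} (halpha : 2 < alpha) (hx : 0 < x) :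
    Tendsto (fun tau => K1 tau alpha x) (𝓝[>] (0:ℝ)) (𝓝 (x ^ 2)) := by
  simp only [K1_eq]
  have h := (tendsto_inner_K1 halpha hx).const_mul (2:ℝ)
  have h2 := (tendsto_const_nhds (x := x ^ 2) (f := 𝓝[>] (0:ℝ))).add h
  simpa using h2

lemma J_nonneg {alpha c r : ℝ} (hc : 0 ≤ c) (S : Set ℝ) (hS : MeasurableSet S) :
    0 ≤ ∫ u in S, hh alpha c r u :=
  setIntegral_nonneg hS fun u _ => hh_nonneg hc _ _

lemma K2_nonneg {mu rho alpha eta tau x : ℝ} (hmu : 0 < mu) (hrho : 0 < rho)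
    (htau : 0 ≤ tau) (hx : 0 ≤ x) (heta : 0 ≤ eta) :
    0 ≤ K2 mu rho alpha eta tau x := by
  rw [K2_eq]
  apply intervalIntegral.integral_nonneg hrho.le
  intro r _
  have hJ : 0 ≤ ∫ u in Ioi (Real.sqrt (rho ^ 2 - r ^ 2)), hh alpha (tau * x ^ alpha * eta) r u :=
    J_nonneg (by positivity) _ measurableSet_Ioi
  have he : Real.exp (-2 * mu * Real.sqrt (rho ^ 2 - r ^ 2)
      - 2 * mu * ∫ u in Ioi (Real.sqrt (rho ^ 2 - r ^ 2)), hh alpha (tau * x ^ alpha * eta) r u)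
      ≤ 1 := by
    rw [Real.exp_le_one_iff]
    have hs := Real.sqrt_nonneg (rho ^ 2 - r ^ 2)
    nlinarith
  linarith

lemma K3_nonneg {mu rho alpha eta tau x : ℝ} (hmu : 0 < mu)
    (htau : 0 ≤ tau) (hx : 0 ≤ x) (heta : 0 ≤ eta) :
    0 ≤ K3 mu rho alpha eta tau x := by
  rw [K3_eq]
  apply setIntegral_nonneg measurableSet_Ioi
  intro r _
  have hJ : 0 ≤ ∫ u in Ioi (0:ℝ), hh alpha (tau * x ^ alpha * eta) r u :=
    J_nonneg (by positivity) _ measurableSet_Ioi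
  have he : Real.exp (-2 * mu * ∫ u in Ioi (0:ℝ), hh alpha (tau * x ^ alpha * eta) r u) ≤ 1 := by
    rw [Real.exp_le_one_iff]
    nlinarith
  linarith

lemma K2_tendsto {mu rho alpha eta x : ℝ} (hmu : 0 < mu) (hrho : 0 < rho)
    (halpha : 2 < alpha) (hx : 0 < x) (heta : 0 < eta) :
    Tendsto (fun tau => K2 mu rho alpha eta tau x) (𝓝[>] (0:ℝ)) (𝓝 (A rho mu)) := by
  have hb : 0 < x ^ alpha * eta := by positivity
  simp only [K2_eq, intervalIntegral.integral_of_le hrho.le]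
  have hA : A rho mu = ∫ r in Ioc (0:ℝ) rho,
      (1 - Real.exp (-2 * mu * Real.sqrt (rho ^ 2 - r ^ 2))) := by
    rw [A, intervalIntegral.integral_of_le hrho.le]
  rw [hA]
  refine tendsto_integral_filter_of_dominated_convergence (bound := fun _ => (1:ℝ)) ?_ ?_ ?_ ?_
  · filter_upwards [self_mem_nhdsWithin] with τ (hτ : τ ∈ Ioi (0:ℝ))
    have mJ : Measurable fun r : ℝ => ∫ u in Ioi (Real.sqrt (rho ^ 2 - r ^ 2)),
        hh alpha (τ * x ^ alpha * eta) r u := by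
      have := measurable_setIntegral_param (α := ℝ)
        (F := fun p : ℝ × ℝ => hh alpha (τ * x ^ alpha * eta) p.1 p.2)
        (by unfold hh; fun_prop) (s := fun r => Real.sqrt (rho ^ 2 - r ^ 2)) (by fun_prop)
      exact this
    have m1 : Measurable fun r : ℝ => Real.sqrt (rho ^ 2 - r ^ 2) := by fun_prop
    exact (measurable_const.sub (((m1.const_mul (-2 * mu)).sub
      (mJ.const_mul (2 * mu))).exp)).aestronglyMeasurable
  · filter_upwards [self_mem_nhdsWithin] with τ (hτ : τ ∈ Ioi (0:ℝ))
    rw [Set.mem_Ioi] at hτ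
    filter_upwards with r
    have hJ : 0 ≤ ∫ u in Ioi (Real.sqrt (rho ^ 2 - r ^ 2)), hh alpha (τ * x ^ alpha * eta) r u :=
      J_nonneg (by positivity) _ measurableSet_Ioi
    have hs := Real.sqrt_nonneg (rho ^ 2 - r ^ 2)
    have he1 : Real.exp (-2 * mu * Real.sqrt (rho ^ 2 - r ^ 2)
        - 2 * mu * ∫ u in Ioi (Real.sqrt (rho ^ 2 - r ^ 2)),
          hh alpha (τ * x ^ alpha * eta) r u) ≤ 1 := by
      rw [Real.exp_le_one_iff]; nlinarith
    have he2 := Real.exp_pos (-2 * mu * Real.sqrt (rho ^ 2 - r ^ 2)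
        - 2 * mu * ∫ u in Ioi (Real.sqrt (rho ^ 2 - r ^ 2)),
          hh alpha (τ * x ^ alpha * eta) r u)
    rw [Real.norm_eq_abs, abs_le]
    constructor <;> linarith
  · exact integrableOn_const measure_Ioc_lt_top.ne
  · have haem : ∀ᵐ r ∂(volume.restrict (Ioc (0:ℝ) rho)), r ∈ Ioo (0:ℝ) rho := by
      have h1 := ae_restrict_mem (μ := volume) measurableSet_Ioc (s := Ioc (0:ℝ) rho)
      have h2 : ∀ᵐ r : ℝ ∂(volume.restrict (Ioc (0:ℝ) rho)), r ≠ rho := by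
        refine ae_restrict_of_ae ?_
        rw [ae_iff]
        have : {a : ℝ | ¬a ≠ rho} = {rho} := by ext a; simp
        rw [this]
        exact measure_singleton rho
      filter_upwards [h1, h2] with r hr hne
      exact ⟨hr.1, lt_of_le_of_ne hr.2 hne⟩
    filter_upwards [haem] with r hr
    have hr0 : 0 < r := hr.1
    have hQ : IntegrableOn (fun u : ℝ => (r ^ 2 + u ^ 2) ^ (-(alpha / 2)))
        (Ioi (Real.sqrt (rho ^ 2 - r ^ 2))) :=
      (integrableOn_Q_Ioi halpha hr0).mono_set (Set.Ioi_subset_Ioi (Real.sqrt_nonneg _))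
    have hJt : Tendsto (fun τ => ∫ u in Ioi (Real.sqrt (rho ^ 2 - r ^ 2)),
        hh alpha (τ * x ^ alpha * eta) r u) (𝓝[>] (0:ℝ)) (𝓝 0) := by
      have := tendsto_inner (alpha := alpha) (b := x ^ alpha * eta) (r := r) hb
        measurableSet_Ioi hQ
      refine this.congr fun τ => ?_
      congr 1
      rw [← mul_assoc]
    have T1 : Tendsto (fun τ => -2 * mu * Real.sqrt (rho ^ 2 - r ^ 2)
        - 2 * mu * ∫ u in Ioi (Real.sqrt (rho ^ 2 - r ^ 2)), hh alpha (τ * x ^ alpha * eta) r u)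
        (𝓝[>] (0:ℝ)) (𝓝 (-2 * mu * Real.sqrt (rho ^ 2 - r ^ 2) - 2 * mu * 0)) :=
      tendsto_const_nhds.sub (hJt.const_mul (2 * mu))
    have T2 := (Real.continuous_exp.tendsto _).comp T1
    have T3 := (tendsto_const_nhds (x := (1:ℝ)) (f := 𝓝[>] (0:ℝ))).sub T2
    simpa using T3

lemma integrableOn_hh {alpha c r : ℝ} (hc : 0 ≤ c) {S : Set ℝ}
    (hQ : IntegrableOn (fun u : ℝ => (r ^ 2 + u ^ 2) ^ (-(alpha / 2))) S) :
    IntegrableOn (fun u => hh alpha c r u) S := by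
  refine (hQ.const_mul c).mono' measurable_hh.aestronglyMeasurable ?_
  filter_upwards with u
  rw [Real.norm_of_nonneg (hh_nonneg hc _ _)]
  exact hh_le hc _ _

lemma integral_hh_le {alpha c r : ℝ} (hc : 0 ≤ c) (halpha : 2 < alpha) (hr : 0 < r) :
    ∫ u in Ioi (0:ℝ), hh alpha c r u ≤ c * ((1 + (alpha - 1)⁻¹) * r ^ (1 - alpha)) := by
  have hQ := integrableOn_Q_Ioi halpha hr
  calc ∫ u in Ioi (0:ℝ), hh alpha c r u
      ≤ ∫ u in Ioi (0:ℝ), c * (r ^ 2 + u ^ 2) ^ (-(alpha / 2)) :=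
        setIntegral_mono_on (integrableOn_hh hc hQ) (hQ.const_mul c) measurableSet_Ioi
          fun u _ => hh_le hc r u
    _ = c * ∫ u in Ioi (0:ℝ), (r ^ 2 + u ^ 2) ^ (-(alpha / 2)) := integral_const_mul c _
    _ ≤ c * ((1 + (alpha - 1)⁻¹) * r ^ (1 - alpha)) :=
        mul_le_mul_of_nonneg_left (integral_Q_le halpha hr) hc

lemma K3_tendsto {mu rho alpha eta x : ℝ} (hmu : 0 < mu) (hrho : 0 < rho)
    (halpha : 2 < alpha) (hx : 0 < x) (heta : 0 < eta) :
    Tendsto (fun tau => K3 mu rho alpha eta tau x) (𝓝[>] (0:ℝ)) (𝓝 0) := by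
  have hb : 0 < x ^ alpha * eta := by positivity
  simp only [K3_eq]
  suffices h : Tendsto (fun tau => ∫ r in Ioi rho,
      (1 - Real.exp (-2 * mu * ∫ u in Ioi (0:ℝ), hh alpha (tau * x ^ alpha * eta) r u)))
      (𝓝[>] (0:ℝ)) (𝓝 (∫ r in Ioi rho, (0:ℝ))) by simpa using h
  refine tendsto_integral_filter_of_dominated_convergence
    (bound := fun r => 2 * mu * (x ^ alpha * eta * ((1 + (alpha - 1)⁻¹) * r ^ (1 - alpha))))
    ?_ ?_ ?_ ?_
  · filter_upwards [self_mem_nhdsWithin] with τ (hτ : τ ∈ Ioi (0:ℝ))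
    have mJ : Measurable fun r : ℝ => ∫ u in Ioi (0:ℝ), hh alpha (τ * x ^ alpha * eta) r u := by
      have := measurable_setIntegral_param' (α := ℝ)
        (F := fun p : ℝ × ℝ => hh alpha (τ * x ^ alpha * eta) p.1 p.2)
        (by unfold hh; fun_prop) (T := Ioi (0:ℝ)) measurableSet_Ioi
      exact this
    exact (measurable_const.sub ((mJ.const_mul (-2 * mu)).exp)).aestronglyMeasurable
  · have hIoo : Ioo (0:ℝ) 1 ∈ 𝓝[>] (0:ℝ) :=
      Ioo_mem_nhdsGT zero_lt_one
    filter_upwards [hIoo] with τ hτ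
    filter_upwards [ae_restrict_mem (μ := volume) measurableSet_Ioi] with r hr
    have hr0 : 0 < r := hrho.trans hr
    have hc : 0 ≤ τ * x ^ alpha * eta :=
      mul_nonneg (mul_nonneg hτ.1.le (Real.rpow_nonneg hx.le _)) heta.le
    have hJ : 0 ≤ ∫ u in Ioi (0:ℝ), hh alpha (τ * x ^ alpha * eta) r u :=
      J_nonneg hc _ measurableSet_Ioi
    have he1 : Real.exp (-2 * mu * ∫ u in Ioi (0:ℝ), hh alpha (τ * x ^ alpha * eta) r u) ≤ 1 := by
      rw [Real.exp_le_one_iff]; nlinarith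
    have hJle : (∫ u in Ioi (0:ℝ), hh alpha (τ * x ^ alpha * eta) r u)
        ≤ (τ * x ^ alpha * eta) * ((1 + (alpha - 1)⁻¹) * r ^ (1 - alpha)) :=
      integral_hh_le hc halpha hr0
    have hone : 1 - Real.exp (-2 * mu * ∫ u in Ioi (0:ℝ), hh alpha (τ * x ^ alpha * eta) r u)
        ≤ 2 * mu * ∫ u in Ioi (0:ℝ), hh alpha (τ * x ^ alpha * eta) r u := by
      have := aux_one_sub_exp_le (2 * mu * ∫ u in Ioi (0:ℝ), hh alpha (τ * x ^ alpha * eta) r u)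
      have harg : -(2 * mu * ∫ u in Ioi (0:ℝ), hh alpha (τ * x ^ alpha * eta) r u)
          = -2 * mu * ∫ u in Ioi (0:ℝ), hh alpha (τ * x ^ alpha * eta) r u := by ring
      rwa [harg] at this
    have hpos := Real.exp_pos (-2 * mu * ∫ u in Ioi (0:ℝ), hh alpha (τ * x ^ alpha * eta) r u)
    rw [Real.norm_eq_abs, abs_of_nonneg (by linarith)]
    have hrp : (0:ℝ) ≤ r ^ (1 - alpha) := Real.rpow_nonneg hr0.le _
    have hi : (1:ℝ) + (alpha - 1)⁻¹ ≥ 0 := by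
      have : (0:ℝ) < (alpha - 1)⁻¹ := by
        apply inv_pos.2; linarith
      linarith
    have hτ1 : τ * x ^ alpha * eta ≤ x ^ alpha * eta := by
      have hxa : (0:ℝ) < x ^ alpha := by positivity
      nlinarith [hτ.1, hτ.2]
    calc 1 - Real.exp (-2 * mu * ∫ u in Ioi (0:ℝ), hh alpha (τ * x ^ alpha * eta) r u)
        ≤ 2 * mu * ∫ u in Ioi (0:ℝ), hh alpha (τ * x ^ alpha * eta) r u := hone
      _ ≤ 2 * mu * ((τ * x ^ alpha * eta) * ((1 + (alpha - 1)⁻¹) * r ^ (1 - alpha))) := by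
          have := mul_le_mul_of_nonneg_left hJle (by positivity : (0:ℝ) ≤ 2 * mu)
          linarith
      _ ≤ 2 * mu * (x ^ alpha * eta * ((1 + (alpha - 1)⁻¹) * r ^ (1 - alpha))) := by
          have h2 : (0:ℝ) ≤ (1 + (alpha - 1)⁻¹) * r ^ (1 - alpha) := mul_nonneg hi hrp
          have h3 := mul_le_mul_of_nonneg_right hτ1 h2
          have h4 := mul_le_mul_of_nonneg_left h3 (by positivity : (0:ℝ) ≤ 2 * mu)
          linarith
  · refine Integrable.const_mul ?_ (2 * mu)
    have : IntegrableOn (fun r : ℝ => (x ^ alpha * eta * (1 + (alpha - 1)⁻¹)) * r ^ (1 - alpha))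
        (Ioi rho) := (integrableOn_Ioi_rpow_of_lt (by linarith) hrho).const_mul _
    refine this.congr_fun (fun r _ => by ring) measurableSet_Ioi
  · filter_upwards [ae_restrict_mem (μ := volume) measurableSet_Ioi] with r hr
    have hr0 : 0 < r := hrho.trans hr
    have hJt : Tendsto (fun τ => ∫ u in Ioi (0:ℝ), hh alpha (τ * x ^ alpha * eta) r u)
        (𝓝[>] (0:ℝ)) (𝓝 0) := by
      have := tendsto_inner (alpha := alpha) (b := x ^ alpha * eta) (r := r) hb
        measurableSet_Ioi (integrableOn_Q_Ioi halpha hr0)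
      refine this.congr fun τ => ?_
      congr 1
      rw [← mul_assoc]
    have T1 : Tendsto (fun τ => -2 * mu * ∫ u in Ioi (0:ℝ), hh alpha (τ * x ^ alpha * eta) r u)
        (𝓝[>] (0:ℝ)) (𝓝 (-2 * mu * 0)) := hJt.const_mul (-2 * mu)
    have T2 := (Real.continuous_exp.tendsto _).comp T1
    have T3 := (tendsto_const_nhds (x := (1:ℝ)) (f := 𝓝[>] (0:ℝ))).sub T2
    simpa using T3

lemma measurable_integrand (lamB lamL mu rho alpha eta tau : ℝ) (hrho : 0 < rho) :
    Measurable fun x : ℝ => 2 * Real.pi * lamB * x *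
      Real.exp (-(Real.pi * lamB * K1 tau alpha x) - 2 * lamL * K2 mu rho alpha eta tau x
        - 2 * lamL * K3 mu rho alpha eta tau x) := by
  have mK1 : Measurable fun x => K1 tau alpha x := by
    simp only [K1_eq]
    have mI : Measurable fun x : ℝ => ∫ r in Ioi x, ff alpha (tau * x ^ alpha) r := by
      have := measurable_setIntegral_param (α := ℝ)
        (F := fun p : ℝ × ℝ => ff alpha (tau * p.1 ^ alpha) p.2)
        (by unfold ff; fun_prop) (s := fun x : ℝ => x) measurable_id
      exact this
    exact (measurable_id.pow_const 2).add (mI.const_mul 2)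
  have mK2 : Measurable fun x => K2 mu rho alpha eta tau x := by
    have mJ : Measurable fun p : ℝ × ℝ => ∫ u in Ioi (Real.sqrt (rho ^ 2 - p.2 ^ 2)),
        hh alpha (tau * p.1 ^ alpha * eta) p.2 u := by
      have := measurable_setIntegral_param (α := ℝ × ℝ)
        (F := fun pp : (ℝ × ℝ) × ℝ => hh alpha (tau * pp.1.1 ^ alpha * eta) pp.1.2 pp.2)
        (by unfold hh; fun_prop)
        (s := fun p : ℝ × ℝ => Real.sqrt (rho ^ 2 - p.2 ^ 2)) (by fun_prop)
      exact this
    have m1 : Measurable fun p : ℝ × ℝ => Real.sqrt (rho ^ 2 - p.2 ^ 2) := by fun_prop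
    have mg : Measurable fun p : ℝ × ℝ =>
        1 - Real.exp (-2 * mu * Real.sqrt (rho ^ 2 - p.2 ^ 2)
          - 2 * mu * ∫ u in Ioi (Real.sqrt (rho ^ 2 - p.2 ^ 2)),
              hh alpha (tau * p.1 ^ alpha * eta) p.2 u) :=
      measurable_const.sub (((m1.const_mul (-2 * mu)).sub (mJ.const_mul (2 * mu))).exp)
    have mO := measurable_setIntegral_param' (α := ℝ) mg (T := Ioc (0:ℝ) rho) measurableSet_Ioc
    have heq : (fun x => K2 mu rho alpha eta tau x)
        = fun x : ℝ => ∫ r in Ioc (0:ℝ) rho,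
            (1 - Real.exp (-2 * mu * Real.sqrt (rho ^ 2 - r ^ 2)
              - 2 * mu * ∫ u in Ioi (Real.sqrt (rho ^ 2 - r ^ 2)),
                  hh alpha (tau * x ^ alpha * eta) r u)) := by
      funext x
      rw [K2_eq, intervalIntegral.integral_of_le hrho.le]
    rw [heq]
    exact mO
  have mK3 : Measurable fun x => K3 mu rho alpha eta tau x := by
    have mJ : Measurable fun p : ℝ × ℝ => ∫ u in Ioi (0:ℝ),
        hh alpha (tau * p.1 ^ alpha * eta) p.2 u := by
      have := measurable_setIntegral_param' (α := ℝ × ℝ)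
        (F := fun pp : (ℝ × ℝ) × ℝ => hh alpha (tau * pp.1.1 ^ alpha * eta) pp.1.2 pp.2)
        (by unfold hh; fun_prop) (T := Ioi (0:ℝ)) measurableSet_Ioi
      exact this
    have mg : Measurable fun p : ℝ × ℝ =>
        1 - Real.exp (-2 * mu * ∫ u in Ioi (0:ℝ), hh alpha (tau * p.1 ^ alpha * eta) p.2 u) :=
      measurable_const.sub ((mJ.const_mul (-2 * mu)).exp)
    have mO := measurable_setIntegral_param' (α := ℝ) mg (T := Ioi rho) measurableSet_Ioi
    have heq : (fun x => K3 mu rho alpha eta tau x)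
        = fun x : ℝ => ∫ r in Ioi rho,
            (1 - Real.exp (-2 * mu * ∫ u in Ioi (0:ℝ), hh alpha (tau * x ^ alpha * eta) r u)) := by
      funext x
      rw [K3_eq]
    rw [heq]
    exact mO
  exact (measurable_id.const_mul (2 * Real.pi * lamB)).mul
    ((((mK1.const_mul (Real.pi * lamB)).neg).sub (mK2.const_mul (2 * lamL))).sub
      (mK3.const_mul (2 * lamL))).exp


theorem downlink_coverage_tendsto_assoc (lamB lamL mu rho alpha eta : ℝ) (hlamB : 0 < lamB) (hlamL : 0 < lamL)
    (hmu : 0 < mu) (hrho : 0 < rho) (halpha : 2 < alpha) (heta : 0 < eta) :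
    Filter.Tendsto (fun tau => C_DL lamB lamL mu rho alpha eta tau)
      (nhdsWithin 0 (Set.Ioi (0:ℝ))) (nhds (P_DL lamL mu rho)) := by
  have hbpos : 0 < Real.pi * lamB := by positivity
  have hlim : Tendsto (fun tau => ∫ x in Ioi (0:ℝ),
      2 * Real.pi * lamB * x *
        Real.exp (-(Real.pi * lamB * K1 tau alpha x) - 2 * lamL * K2 mu rho alpha eta tau x
          - 2 * lamL * K3 mu rho alpha eta tau x)) (𝓝[>] (0:ℝ))
      (𝓝 (∫ x in Ioi (0:ℝ), 2 * Real.pi * lamB * Real.exp (-(2 * lamL * A rho mu))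
        * (x * Real.exp (-(Real.pi * lamB) * x ^ 2)))) := by
    refine tendsto_integral_filter_of_dominated_convergence
      (bound := fun x => 2 * Real.pi * lamB * (x * Real.exp (-(Real.pi * lamB) * x ^ 2)))
      ?_ ?_ ?_ ?_
    · filter_upwards with τ
      exact (measurable_integrand lamB lamL mu rho alpha eta τ hrho).aestronglyMeasurable
    · filter_upwards [self_mem_nhdsWithin] with τ (hτ : τ ∈ Ioi (0:ℝ))
      rw [Set.mem_Ioi] at hτ
      filter_upwards [ae_restrict_mem (μ := volume) measurableSet_Ioi] with x hx
      rw [Set.mem_Ioi] at hx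
      have h1 : x ^ 2 ≤ K1 τ alpha x := K1_ge hτ hx
      have h2 := K2_nonneg (mu := mu) (rho := rho) (alpha := alpha) (eta := eta)
        (tau := τ) (x := x) hmu hrho hτ.le hx.le heta.le
      have h3 := K3_nonneg (mu := mu) (rho := rho) (alpha := alpha) (eta := eta)
        (tau := τ) (x := x) hmu hτ.le hx.le heta.le
      have hE : -(Real.pi * lamB * K1 τ alpha x) - 2 * lamL * K2 mu rho alpha eta τ x
          - 2 * lamL * K3 mu rho alpha eta τ x ≤ -(Real.pi * lamB) * x ^ 2 := by
        have hm := mul_le_mul_of_nonneg_left h1 (le_of_lt hbpos)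
        have e' : -(Real.pi * lamB) * x ^ 2 = -(Real.pi * lamB * x ^ 2) := by ring
        rw [e']
        nlinarith [mul_le_mul_of_nonneg_left h2 (by positivity : (0:ℝ) ≤ 2 * lamL),
          mul_le_mul_of_nonneg_left h3 (by positivity : (0:ℝ) ≤ 2 * lamL)]
      have hnn : (0:ℝ) ≤ 2 * Real.pi * lamB * x :=
        mul_nonneg (by positivity : (0:ℝ) ≤ 2 * Real.pi * lamB) hx.le
      rw [Real.norm_of_nonneg (mul_nonneg hnn (Real.exp_pos _).le)]
      calc 2 * Real.pi * lamB * x *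
            Real.exp (-(Real.pi * lamB * K1 τ alpha x) - 2 * lamL * K2 mu rho alpha eta τ x
              - 2 * lamL * K3 mu rho alpha eta τ x)
          ≤ 2 * Real.pi * lamB * x * Real.exp (-(Real.pi * lamB) * x ^ 2) :=
            mul_le_mul_of_nonneg_left (Real.exp_le_exp.mpr hE) hnn
        _ = 2 * Real.pi * lamB * (x * Real.exp (-(Real.pi * lamB) * x ^ 2)) := by ring
    · exact ((integrable_mul_exp_neg_mul_sq hbpos).integrableOn).const_mul (2 * Real.pi * lamB)
    · filter_upwards [ae_restrict_mem (μ := volume) measurableSet_Ioi] with x hx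
      rw [Set.mem_Ioi] at hx
      have TK1 := K1_tendsto (alpha := alpha) (x := x) halpha hx
      have TK2 := K2_tendsto (mu := mu) (rho := rho) (alpha := alpha) (eta := eta) (x := x)
        hmu hrho halpha hx heta
      have TK3 := K3_tendsto (mu := mu) (rho := rho) (alpha := alpha) (eta := eta) (x := x)
        hmu hrho halpha hx heta
      have TE : Tendsto (fun τ => -(Real.pi * lamB * K1 τ alpha x)
          - 2 * lamL * K2 mu rho alpha eta τ x - 2 * lamL * K3 mu rho alpha eta τ x)
          (𝓝[>] (0:ℝ))
          (𝓝 (-(Real.pi * lamB * x ^ 2) - 2 * lamL * A rho mu - 2 * lamL * 0)) :=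
        (((TK1.const_mul (Real.pi * lamB)).neg).sub (TK2.const_mul (2 * lamL))).sub
          (TK3.const_mul (2 * lamL))
      have Texp := (Real.continuous_exp.tendsto _).comp TE
      have Tfull := Texp.const_mul (2 * Real.pi * lamB * x)
      have heq : 2 * Real.pi * lamB * x *
          Real.exp (-(Real.pi * lamB * x ^ 2) - 2 * lamL * A rho mu - 2 * lamL * 0)
          = 2 * Real.pi * lamB * Real.exp (-(2 * lamL * A rho mu))
            * (x * Real.exp (-(Real.pi * lamB) * x ^ 2)) := by
        rw [show -(Real.pi * lamB * x ^ 2) - 2 * lamL * A rho mu - 2 * lamL * 0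
          = (-(Real.pi * lamB) * x ^ 2) + (-(2 * lamL * A rho mu)) by ring, Real.exp_add]
        ring
      rw [heq] at Tfull
      exact Tfull
  have hval : (∫ x in Ioi (0:ℝ), 2 * Real.pi * lamB * Real.exp (-(2 * lamL * A rho mu))
      * (x * Real.exp (-(Real.pi * lamB) * x ^ 2))) = P_DL lamL mu rho := by
    rw [integral_const_mul, integral_x_exp hbpos]
    rw [P_DL, show -2 * lamL * A rho mu = -(2 * lamL * A rho mu) by ring]
    have hπ : Real.pi ≠ 0 := Real.pi_ne_zero
    field_simp
  rw [← hval]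
  exact hlim
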